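/- For 1 ≤ s ≤ n/2, the operator C(q)_s* : L²(V_{n−s}) → L²(V_s) defined by C(q)_s*(f)(W) = Σ_{W' ⊕ W = V} f(W') is a GL_n(q)-intertwining operator and satisfies C(q)_s* ∘ R(q)_{n−s}* = q^{(n−s)−(s−1)} · (R(q)_{s−1} ∘ C(q)_{s−1}*). -/

import Mathlib

open Module

/-- The operator `C(q)_s* : L²(V_{n-s}) → L²(V_s)`,
`C(q)_s* f W = ∑_{W' ⊕ W = V} f W'`. -/
noncomputable def Cstar (F : Type) [Field F] (n s : ℕ)
    (f : Submodule F (Fin n → F) → ℂ) (W : Submodule F (Fin n → F)) : ℂ :=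
  ∑ᶠ W' ∈ {W' : Submodule F (Fin n → F) | finrank F W' = n - s ∧ IsCompl W' W}, f W'

/-- The `q`-Radon transform `R(q)_m : L²(V_m) → L²(V_{m+1})`,
`(R(q)_m f) Y = ∑_{Z ⊂ Y, dim Z = m} f Z`. -/
noncomputable def RUp (F : Type) [Field F] (n m : ℕ)
    (f : Submodule F (Fin n → F) → ℂ) (Y : Submodule F (Fin n → F)) : ℂ :=
  ∑ᶠ Z ∈ {Z : Submodule F (Fin n → F) | Z ≤ Y ∧ finrank F Z = m}, f Z

/-- The adjoint `q`-Radon transform `(R(q)* f) Y = ∑_{Z' ⊃ Y, dim Z' = m} f Z'`. -/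
noncomputable def RStar (F : Type) [Field F] (n m : ℕ)
    (f : Submodule F (Fin n → F) → ℂ) (Y : Submodule F (Fin n → F)) : ℂ :=
  ∑ᶠ Z' ∈ {Z' : Submodule F (Fin n → F) | Y ≤ Z' ∧ finrank F Z' = m}, f Z'

section StmtAux

set_option linter.unusedSectionVars false

variable {F : Type} [Field F] {n : ℕ}

lemma isCompl_map_linEquiv (g : (Fin n → F) ≃ₗ[F] (Fin n → F)) {A B : Submodule F (Fin n → F)}
    (h : IsCompl A B) :
    IsCompl (A.map (g : (Fin n → F) →ₗ[F] (Fin n → F))) (B.map (g : (Fin n → F) →ₗ[F] (Fin n → F))) := by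
  rw [isCompl_iff, disjoint_iff, codisjoint_iff] at h ⊢
  constructor
  · rw [← Submodule.map_inf (g : (Fin n → F) →ₗ[F] (Fin n → F)) (by exact g.injective), h.1,
      Submodule.map_bot]
  · rw [← Submodule.map_sup, h.2, Submodule.map_top]
    exact LinearEquiv.range g
lemma map_map_linEquiv (g : (Fin n → F) ≃ₗ[F] (Fin n → F)) (U : Submodule F (Fin n → F)) :
    (U.map (g : (Fin n → F) →ₗ[F] (Fin n → F))).map (g.symm : (Fin n → F) →ₗ[F] (Fin n → F)) = U := by
  rw [← Submodule.map_comp]; simp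
lemma map_map_linEquiv' (g : (Fin n → F) ≃ₗ[F] (Fin n → F)) (U : Submodule F (Fin n → F)) :
    (U.map (g.symm : (Fin n → F) →ₗ[F] (Fin n → F))).map (g : (Fin n → F) →ₗ[F] (Fin n → F)) = U := by
  rw [← Submodule.map_comp]; simp

variable [Fintype F]

/-- number of projection maps onto p equals |Hom(q0,p)| -/
noncomputable def projEquivHom {M : Type} [AddCommGroup M] [Module F M]
    (p q0 : Submodule F M) (h : IsCompl p q0) :
    {f : M →ₗ[F] p // ∀ x : p, f x = x} ≃ (q0 →ₗ[F] p) where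
  toFun f := (f : M →ₗ[F] p).domRestrict q0
  invFun g := ⟨Submodule.projectionOnto p q0 h + g ∘ₗ Submodule.projectionOnto q0 p h.symm,
    fun x => by
      simp [Submodule.projectionOnto_apply_left h x,
        Submodule.projectionOnto_apply_of_mem_right h.symm x.2]⟩
  left_inv f := by
    ext x
    obtain ⟨f, hf⟩ := f
    simp only [LinearMap.add_apply, LinearMap.coe_comp, Function.comp_apply,
      LinearMap.domRestrict_apply]
    conv_rhs => rw [← Submodule.projection_add_projection_eq_self h x]
    rw [map_add, Submodule.projection_apply, Submodule.projection_apply, hf]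
  right_inv g := by
    ext y
    simp [Submodule.projectionOnto_apply_of_mem_right h y.2,
      Submodule.projectionOnto_apply_left h.symm y]

lemma card_hom {M : Type} [AddCommGroup M] [Module F M]
    (p q0 : Submodule F M) [FiniteDimensional F p] [FiniteDimensional F q0] :
    Nat.card (q0 →ₗ[F] p) = (Fintype.card F) ^ (finrank F q0 * finrank F p) := by
  have e := LinearMap.toMatrix (finBasis F q0) (finBasis F p)
  rw [Nat.card_congr e.toEquiv]
  simp [Nat.card_eq_fintype_card, Matrix, Fintype.card_fun, ← pow_mul]


lemma card_compls {M : Type} [AddCommGroup M] [Module F M] [FiniteDimensional F M]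
    (p : Submodule F M) :
    Nat.card {q : Submodule F M // IsCompl p q}
      = (Fintype.card F) ^ ((finrank F M - finrank F p) * finrank F p) := by
  obtain ⟨q0, hq0⟩ := Submodule.exists_isCompl p
  rw [Nat.card_congr ((p.isComplEquivProj).trans (projEquivHom p q0 hq0)), card_hom]
  congr 2
  have := Submodule.finrank_add_eq_of_isCompl hq0
  omega

lemma card_rel_compls {M : Type} [AddCommGroup M] [Module F M] [FiniteDimensional F M]
    (T L : Submodule F M) (hLT : L ≤ T) :
    Nat.card {X : Submodule F M // X ⊓ L = ⊥ ∧ X ⊔ L = T}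
      = (Fintype.card F) ^ ((finrank F T - finrank F L) * finrank F L) := by
  classical
  set L' : Submodule F T := L.comap T.subtype with hL'
  have hmapL' : (L').map T.subtype = L := by
    rw [hL', Submodule.map_comap_subtype, inf_eq_right.mpr hLT]
  have hinj : Function.Injective (Submodule.map T.subtype) :=
    Submodule.map_injective_of_injective T.injective_subtype
  have e : {q : Submodule F T // IsCompl L' q} ≃ {X : Submodule F M // X ⊓ L = ⊥ ∧ X ⊔ L = T} := by
    refine Equiv.ofBijective (fun q => ⟨(q : Submodule F T).map T.subtype, ?_, ?_⟩) ⟨?_, ?_⟩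
    · rw [← hmapL', ← Submodule.map_inf _ T.injective_subtype,
        inf_comm, q.2.disjoint.eq_bot, Submodule.map_bot]
    · rw [← hmapL', ← Submodule.map_sup, sup_comm, q.2.codisjoint.eq_top,
        Submodule.map_subtype_top]
    · intro a b hab
      exact Subtype.ext (hinj (congrArg Subtype.val hab))
    · rintro ⟨X, h1, h2⟩
      have hXT : X ≤ T := le_trans le_sup_left h2.le
      have hmapX : (X.comap T.subtype).map T.subtype = X := by
        rw [Submodule.map_comap_subtype, inf_eq_right.mpr hXT]
      refine ⟨⟨X.comap T.subtype, ?_⟩, Subtype.ext hmapX⟩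
      rw [isCompl_iff, disjoint_iff, codisjoint_iff]
      constructor
      · apply hinj
        rw [Submodule.map_inf _ T.injective_subtype, hmapL', hmapX, Submodule.map_bot, inf_comm]
        exact h1
      · apply hinj
        rw [Submodule.map_sup, hmapL', hmapX, Submodule.map_subtype_top, sup_comm]
        exact h2
  have hrk : finrank F L' = finrank F L := by
    rw [← hmapL']
    exact (Submodule.equivMapOfInjective T.subtype T.injective_subtype L').finrank_eq
  rw [← Nat.card_congr e, card_compls, hrk]

variable {n s : ℕ}

lemma dim_line (hs : 1 ≤ s) (hsn : 2 * s ≤ n) (W Z' : Submodule F (Fin n → F))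
    (hW : finrank F W = s) (hZ' : finrank F Z' = n - s + 1) (hZW : Z' ⊔ W = ⊤) :
    finrank F (Z' ⊓ W : Submodule F (Fin n → F)) = 1 := by
  have h := Submodule.finrank_sup_add_finrank_inf_eq Z' W
  rw [hZW, finrank_top, Module.finrank_fin_fun, hW, hZ'] at h
  omega

lemma countA (hs : 1 ≤ s) (hsn : 2 * s ≤ n) (W Z' : Submodule F (Fin n → F))
    (hW : finrank F W = s) (hZ' : finrank F Z' = n - s + 1) (hZW : Z' ⊔ W = ⊤) :
    Nat.card {W' : Submodule F (Fin n → F) // finrank F W' = n - s ∧ IsCompl W' W ∧ W' ≤ Z'}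
      = (Fintype.card F) ^ (n - s) := by
  have hn : finrank F (Fin n → F) = n := Module.finrank_fin_fun F
  set L : Submodule F (Fin n → F) := Z' ⊓ W with hLdef
  have hL : finrank F L = 1 := dim_line hs hsn W Z' hW hZ' hZW
  have hiff : ∀ X : Submodule F (Fin n → F),
      (finrank F X = n - s ∧ IsCompl X W ∧ X ≤ Z') ↔ (X ⊓ L = ⊥ ∧ X ⊔ L = Z') := by
    intro X
    constructor
    · rintro ⟨hd, hc, hle⟩
      have hXW : X ⊓ W = ⊥ := disjoint_iff.mp hc.disjoint
      have hbot : X ⊓ L = ⊥ :=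
        le_bot_iff.mp (le_trans (inf_le_inf_left X inf_le_right) hXW.le)
      refine ⟨hbot, ?_⟩
      apply Submodule.eq_of_le_of_finrank_eq (sup_le hle inf_le_left)
      have h2 := Submodule.finrank_sup_add_finrank_inf_eq X L
      rw [hbot, finrank_bot, hd, hL] at h2
      rw [← hLdef, hZ']
      omega
    · rintro ⟨hb, hsup'⟩
      have hle : X ≤ Z' := le_trans le_sup_left hsup'.le
      have h2 := Submodule.finrank_sup_add_finrank_inf_eq X L
      rw [hb, finrank_bot, hsup', hL, hZ'] at h2
      have hd : finrank F X = n - s := by omega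
      have hXW : X ⊓ W = ⊥ := by
        calc X ⊓ W = X ⊓ Z' ⊓ W := by rw [inf_eq_left.mpr hle]
        _ = X ⊓ (Z' ⊓ W) := inf_assoc X Z' W
        _ = ⊥ := hb
      have h3 := Submodule.finrank_sup_add_finrank_inf_eq X W
      rw [hXW, finrank_bot, hd, hW] at h3
      have htop : X ⊔ W = ⊤ := by
        apply Submodule.eq_top_of_finrank_eq
        rw [hn]; omega
      exact ⟨hd, isCompl_iff.mpr ⟨disjoint_iff.mpr hXW, codisjoint_iff.mpr htop⟩, hle⟩
  rw [Nat.card_congr (Equiv.subtypeEquivRight hiff),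
    card_rel_compls Z' L inf_le_left, hL, hZ']
  congr 1
  omega

lemma countB (hs : 1 ≤ s) (hsn : 2 * s ≤ n) (W Z' : Submodule F (Fin n → F))
    (hW : finrank F W = s) (hZ' : finrank F Z' = n - s + 1) (hZW : Z' ⊔ W = ⊤) :
    Nat.card {Z : Submodule F (Fin n → F) // Z ≤ W ∧ finrank F Z = s - 1 ∧ IsCompl Z' Z}
      = (Fintype.card F) ^ (s - 1) := by
  have hn : finrank F (Fin n → F) = n := Module.finrank_fin_fun F
  set L : Submodule F (Fin n → F) := Z' ⊓ W with hLdef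
  have hL : finrank F L = 1 := dim_line hs hsn W Z' hW hZ' hZW
  have hiff : ∀ X : Submodule F (Fin n → F),
      (X ≤ W ∧ finrank F X = s - 1 ∧ IsCompl Z' X) ↔ (X ⊓ L = ⊥ ∧ X ⊔ L = W) := by
    intro X
    constructor
    · rintro ⟨hle, hd, hc⟩
      have hXZ : Z' ⊓ X = ⊥ := disjoint_iff.mp hc.disjoint
      have hbot : X ⊓ L = ⊥ := by
        apply le_bot_iff.mp
        calc X ⊓ L ≤ X ⊓ Z' := inf_le_inf_left X inf_le_left
        _ = Z' ⊓ X := inf_comm X Z'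
        _ = ⊥ := hXZ
      refine ⟨hbot, ?_⟩
      apply Submodule.eq_of_le_of_finrank_eq (sup_le hle inf_le_right)
      have h2 := Submodule.finrank_sup_add_finrank_inf_eq X L
      rw [hbot, finrank_bot, hd, hL] at h2
      rw [← hLdef, hW]
      omega
    · rintro ⟨hb, hsup'⟩
      have hle : X ≤ W := le_trans le_sup_left hsup'.le
      have h2 := Submodule.finrank_sup_add_finrank_inf_eq X L
      rw [hb, finrank_bot, hsup', hL, hW] at h2
      have hd : finrank F X = s - 1 := by omega
      have hXZ : Z' ⊓ X = ⊥ := by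
        calc Z' ⊓ X = Z' ⊓ (X ⊓ W) := by rw [inf_eq_left.mpr hle]
        _ = X ⊓ (Z' ⊓ W) := by rw [← inf_assoc, inf_comm Z' X, inf_assoc]
        _ = ⊥ := hb
      have h3 := Submodule.finrank_sup_add_finrank_inf_eq Z' X
      rw [hXZ, finrank_bot, hd, hZ'] at h3
      have htop : Z' ⊔ X = ⊤ := by
        apply Submodule.eq_top_of_finrank_eq
        rw [hn]; omega
      exact ⟨hle, hd, isCompl_iff.mpr ⟨disjoint_iff.mpr hXZ, codisjoint_iff.mpr htop⟩⟩
  rw [Nat.card_congr (Equiv.subtypeEquivRight hiff),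
    card_rel_compls W L inf_le_right, hL, hW, mul_one]

lemma stmt18_finite (F : Type) [Field F] [Fintype F] (n : ℕ) :
    Finite (Submodule F (Fin n → F)) :=
  Finite.of_injective (fun p => (p : Set (Fin n → F))) SetLike.coe_injective

theorem stmt18_part2 (q n s : ℕ) (F : Type) [Field F] [Fintype F] (hF : Fintype.card F = q)
    (hs : 1 ≤ s) (hsn : 2 * s ≤ n)
    (countA : ∀ (W Z' : Submodule F (Fin n → F)), finrank F W = s →
      finrank F Z' = n - s + 1 → Z' ⊔ W = ⊤ →
      Nat.card {W' : Submodule F (Fin n → F) // finrank F W' = n - s ∧ IsCompl W' W ∧ W' ≤ Z'}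
        = (Fintype.card F) ^ (n - s))
    (countB : ∀ (W Z' : Submodule F (Fin n → F)), finrank F W = s →
      finrank F Z' = n - s + 1 → Z' ⊔ W = ⊤ →
      Nat.card {Z : Submodule F (Fin n → F) // Z ≤ W ∧ finrank F Z = s - 1 ∧ IsCompl Z' Z}
        = (Fintype.card F) ^ (s - 1))
    (f : Submodule F (Fin n → F) → ℂ) (W : Submodule F (Fin n → F))
    (hW : finrank F W = s) :
    (∑ᶠ W' ∈ {W' : Submodule F (Fin n → F) | finrank F W' = n - s ∧ IsCompl W' W},
        (∑ᶠ Z' ∈ {Z' : Submodule F (Fin n → F) | W' ≤ Z' ∧ finrank F Z' = n - s + 1}, f Z')) =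
      (q : ℂ) ^ ((n - s) - (s - 1)) *
        ∑ᶠ Z ∈ {Z : Submodule F (Fin n → F) | Z ≤ W ∧ finrank F Z = s - 1},
          (∑ᶠ U ∈ {U : Submodule F (Fin n → F) | finrank F U = n - (s - 1) ∧ IsCompl U Z}, f U) := by
  classical
  haveI := stmt18_finite F n
  subst hF
  set V := Fin n → F
  set S : Set (Submodule F V) := {Z' | finrank F Z' = n - s + 1 ∧ Z' ⊔ W = ⊤} with hS
  set FS : Finset (Submodule F V) := (Set.toFinite S).toFinset with hFS
  -- LHS evaluation
  have evalL : (∑ᶠ W' ∈ {W' : Submodule F V | finrank F W' = n - s ∧ IsCompl W' W},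
        (∑ᶠ Z' ∈ {Z' : Submodule F V | W' ≤ Z' ∧ finrank F Z' = n - s + 1}, f Z')) =
      ∑ Z' ∈ FS, ((Fintype.card F : ℂ) ^ (n - s)) * f Z' := by
    rw [finsum_mem_eq_finite_toFinset_sum _ (Set.toFinite _)]
    have step1 : ∀ W' : Submodule F V,
        (∑ᶠ Z' ∈ {Z' : Submodule F V | W' ≤ Z' ∧ finrank F Z' = n - s + 1}, f Z')
          = ∑ Z' ∈ (Set.toFinite {Z' : Submodule F V | W' ≤ Z' ∧ finrank F Z' = n - s + 1}).toFinset, f Z' :=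
      fun W' => finsum_mem_eq_finite_toFinset_sum _ _
    simp_rw [step1]
    rw [Finset.sum_comm' (s' := fun Z' =>
        (Set.toFinite {W' : Submodule F V | finrank F W' = n - s ∧ IsCompl W' W ∧ W' ≤ Z'}).toFinset)
      (t' := FS) ?_]
    · refine Finset.sum_congr rfl fun Z' hZ' => ?_
      rw [Finset.sum_const]
      rw [Set.Finite.mem_toFinset] at hZ'
      have hc : (Set.toFinite {W' : Submodule F V | finrank F W' = n - s ∧ IsCompl W' W ∧ W' ≤ Z'}).toFinset.card
          = (Fintype.card F) ^ (n - s) := by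
        rw [← Set.ncard_eq_toFinset_card _ _, ← Nat.card_coe_set_eq]
        exact countA W Z' hW hZ'.1 hZ'.2
      rw [hc, nsmul_eq_mul]
      push_cast
      ring
    · intro x y
      simp only [Set.Finite.mem_toFinset, Set.mem_setOf_eq, hFS, hS]
      constructor
      · rintro ⟨⟨h1, h2⟩, h3, h4⟩
        refine ⟨⟨h1, h2, h3⟩, h4, ?_⟩
        have := h2.codisjoint.eq_top
        exact eq_top_iff.mpr (le_trans (by rw [← this]) (sup_le_sup_right h3 W))
      · rintro ⟨⟨h1, h2, h3⟩, h4, h5⟩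
        exact ⟨⟨h1, h2⟩, h3, h4⟩
  -- RHS evaluation
  have evalR : (∑ᶠ Z ∈ {Z : Submodule F V | Z ≤ W ∧ finrank F Z = s - 1},
        (∑ᶠ U ∈ {U : Submodule F V | finrank F U = n - (s - 1) ∧ IsCompl U Z}, f U)) =
      ∑ Z' ∈ FS, ((Fintype.card F : ℂ) ^ (s - 1)) * f Z' := by
    rw [finsum_mem_eq_finite_toFinset_sum _ (Set.toFinite _)]
    have step1 : ∀ Z : Submodule F V,
        (∑ᶠ U ∈ {U : Submodule F V | finrank F U = n - (s - 1) ∧ IsCompl U Z}, f U)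
          = ∑ U ∈ (Set.toFinite {U : Submodule F V | finrank F U = n - (s - 1) ∧ IsCompl U Z}).toFinset, f U :=
      fun Z => finsum_mem_eq_finite_toFinset_sum _ _
    simp_rw [step1]
    rw [Finset.sum_comm' (s' := fun U =>
        (Set.toFinite {Z : Submodule F V | Z ≤ W ∧ finrank F Z = s - 1 ∧ IsCompl U Z}).toFinset)
      (t' := FS) ?_]
    · refine Finset.sum_congr rfl fun Z' hZ' => ?_
      rw [Finset.sum_const]
      rw [Set.Finite.mem_toFinset] at hZ'
      have hc : (Set.toFinite {Z : Submodule F V | Z ≤ W ∧ finrank F Z = s - 1 ∧ IsCompl Z' Z}).toFinset.card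
          = (Fintype.card F) ^ (s - 1) := by
        rw [← Set.ncard_eq_toFinset_card _ _, ← Nat.card_coe_set_eq]
        exact countB W Z' hW hZ'.1 hZ'.2
      rw [hc, nsmul_eq_mul]
      push_cast
      ring
    · intro x y
      simp only [Set.Finite.mem_toFinset, Set.mem_setOf_eq, hFS, hS]
      constructor
      · rintro ⟨⟨h1, h2⟩, h3, h4⟩
        refine ⟨⟨h1, h2, h4⟩, ?_, ?_⟩
        · omega
        · exact eq_top_iff.mpr (le_trans (by rw [← h4.codisjoint.eq_top]) (sup_le_sup_left h1 y))
      · rintro ⟨⟨h1, h2, h3⟩, h4, h5⟩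
        exact ⟨⟨h1, h2⟩, by omega, h3⟩
  rw [evalL, evalR, Finset.mul_sum]
  refine Finset.sum_congr rfl fun Z' _ => ?_
  rw [← mul_assoc, ← pow_add]
  congr 2
  omega


end StmtAux

/-- For `1 ≤ s ≤ n/2`, `C(q)_s*` is a `GL_n(q)`-intertwining operator and
`C(q)_s* ∘ R(q)_{n-s}* = q^((n-s)-(s-1)) · (R(q)_{s-1} ∘ C(q)_{s-1}*)`. -/
theorem stmt18 (q n s : ℕ) (F : Type) [Field F] [Fintype F] (hF : Fintype.card F = q)
    (hs : 1 ≤ s) (hsn : 2 * s ≤ n) :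
    (∀ (g : (Fin n → F) ≃ₗ[F] (Fin n → F)) (f : Submodule F (Fin n → F) → ℂ)
        (W : Submodule F (Fin n → F)), finrank F W = s →
      Cstar F n s (fun U => f (U.map (g.symm : (Fin n → F) →ₗ[F] (Fin n → F)))) W =
        Cstar F n s f (W.map (g.symm : (Fin n → F) →ₗ[F] (Fin n → F)))) ∧
    (∀ (f : Submodule F (Fin n → F) → ℂ) (W : Submodule F (Fin n → F)),
      finrank F W = s →
        Cstar F n s (RStar F n (n - s + 1) f) W =
          (q : ℂ) ^ ((n - s) - (s - 1)) * RUp F n (s - 1) (Cstar F n (s - 1) f) W) := by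
  constructor
  · intro g f W _
    unfold Cstar
    refine finsum_mem_eq_of_bijOn (fun U => U.map (g.symm : (Fin n → F) →ₗ[F] (Fin n → F)))
      ⟨?_, ?_, ?_⟩ (fun x _ => rfl)
    · rintro U ⟨h1, h2⟩
      exact ⟨by rw [LinearEquiv.finrank_map_eq g.symm U]; exact h1, isCompl_map_linEquiv g.symm h2⟩
    · intro a _ b _ hab
      have := congrArg (Submodule.map (g : (Fin n → F) →ₗ[F] (Fin n → F))) hab
      simpa [map_map_linEquiv' g] using this
    · rintro U ⟨h1, h2⟩
      refine ⟨U.map (g : (Fin n → F) →ₗ[F] (Fin n → F)), ⟨?_, ?_⟩, map_map_linEquiv g U⟩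
      · rw [LinearEquiv.finrank_map_eq g U]; exact h1
      · have := isCompl_map_linEquiv g h2
        rwa [map_map_linEquiv' g W] at this
  · intro f W hW
    show Cstar F n s (RStar F n (n - s + 1) f) W = _
    unfold Cstar RStar RUp
    exact stmt18_part2 q n s F hF hs hsn
      (fun W Z' hW hZ' hZW => countA hs hsn W Z' hW hZ' hZW)
      (fun W Z' hW hZ' hZW => countB hs hsn W Z' hW hZ' hZW) f W hW
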